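/- Let A be a Φ-local Φ-ring with 𝔪 the maximal ideal of A^◁ = S⁻¹A. Let I be a finitely generated ideal of A and g ∈ A such that (I, g) is admissible. Then the image of I in A/𝔪 is contained in the image of gA in A/𝔪 if and only if I ⊆ gA. -/
import Mathlib


/-- A ring with constructible supports (a `Φ`-ring): a commutative ring together with a
family of finitely generated ideals (the *admissible* ideals) containing the unit ideal,
stable under products, and such that any finitely generated ideal containing an admissible
ideal is admissible. -/
structure PhiRing (A : Type*) [CommRing A] where
  adm : Set (Ideal A)
  fg_of_mem : ∀ I ∈ adm, I.FG
  top_mem : ⊤ ∈ adm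
  mul_mem : ∀ I ∈ adm, ∀ J ∈ adm, I * J ∈ adm
  enlarge_mem : ∀ I ∈ adm, ∀ J : Ideal A, J.FG → I ≤ J → J ∈ adm

/-- The multiplicative set of elements of `A` generating an admissible ideal. -/
def PhiRing.S {A : Type*} [CommRing A] (Φ : PhiRing A) : Submonoid A where
  carrier := {a : A | Ideal.span {a} ∈ Φ.adm}
  one_mem' := by
    show Ideal.span {(1 : A)} ∈ Φ.adm
    rw [Ideal.span_singleton_one]
    exact Φ.top_mem
  mul_mem' := by
    intro a b ha hb
    show Ideal.span {a * b} ∈ Φ.adm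
    rw [← Ideal.span_singleton_mul_span_singleton]
    exact Φ.mul_mem _ ha _ hb

/-- `A` is `Φ`-local if (it is local and) every admissible ideal is invertible;
in a local ring, an ideal is invertible iff it is generated by a single nonzerodivisor. -/
def PhiRing.IsPhiLocal {A : Type*} [CommRing A] (Φ : PhiRing A) : Prop :=
  ∀ I ∈ Φ.adm, ∃ a ∈ nonZeroDivisors A, I = Ideal.span {a}

/-- Let `A` be a `Φ`-local `Φ`-ring, `𝔪` the maximal ideal of `A^◁ = S⁻¹A` (an ideal of `A`,
given by `𝔪 = ⋂_{s ∈ S} s𝔫`).  Let `I` be a finitely generated ideal of `A` and `g ∈ A` such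
that `(I, g)` is admissible.  Then the image of `I` in `A/𝔪` is contained in the image of
`gA` if and only if `I ⊆ gA`. -/
theorem PhiRing.le_span_singleton_iff_mod_m
    {A : Type*} [CommRing A] [IsLocalRing A] (Φ : PhiRing A) (hΦ : Φ.IsPhiLocal)
    (𝔪 : Ideal A)
    (h𝔪 : 𝔪 = ⨅ s ∈ Φ.S, Ideal.span {s} * IsLocalRing.maximalIdeal A)
    (I : Ideal A) (hIfg : I.FG) (g : A)
    (hadm : I ⊔ Ideal.span {g} ∈ Φ.adm) :
    I.map (Ideal.Quotient.mk 𝔪) ≤ (Ideal.span {g}).map (Ideal.Quotient.mk 𝔪) ↔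
      I ≤ Ideal.span {g} := by
  constructor
  · intro h
    obtain ⟨a, -, heq⟩ := hΦ _ hadm
    have haS : a ∈ Φ.S := by
      show Ideal.span {a} ∈ Φ.adm
      rw [← heq]; exact hadm
    have hIm : I ≤ Ideal.span {g} ⊔ 𝔪 := by
      have h2 : Ideal.comap (Ideal.Quotient.mk 𝔪) ((Ideal.span {g}).map (Ideal.Quotient.mk 𝔪))
          = Ideal.span {g} ⊔ 𝔪 := by
        rw [Ideal.comap_map_of_surjective _ Ideal.Quotient.mk_surjective,
          ← RingHom.ker_eq_comap_bot, Ideal.mk_ker]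
      rw [← h2]
      exact Ideal.map_le_iff_le_comap.mp h
    have hm𝔫 : 𝔪 ≤ Ideal.span {a} * IsLocalRing.maximalIdeal A := by
      rw [h𝔪]
      exact biInf_le (fun s => Ideal.span {s} * IsLocalRing.maximalIdeal A) haS
    have ha_mem : a ∈ Ideal.span {g} ⊔ Ideal.span {a} * IsLocalRing.maximalIdeal A := by
      have h1 : a ∈ I ⊔ Ideal.span {g} := heq ▸ Ideal.mem_span_singleton_self a
      have h3 : I ⊔ Ideal.span {g} ≤
          Ideal.span {g} ⊔ Ideal.span {a} * IsLocalRing.maximalIdeal A :=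
        sup_le (hIm.trans (sup_le_sup_left hm𝔫 _)) le_sup_left
      exact h3 h1
    obtain ⟨y, hy, z, hz, hsum⟩ := Submodule.mem_sup.mp ha_mem
    obtain ⟨x, hxg⟩ := Ideal.mem_span_singleton'.mp hy
    obtain ⟨m, hm, hz'⟩ := Ideal.mem_span_singleton_mul.mp hz
    have hum : IsUnit (1 - m) := IsLocalRing.isUnit_one_sub_self_of_mem_nonunits m hm
    obtain ⟨u, hu⟩ := hum
    have hag : a ∈ Ideal.span {g} := by
      rw [Ideal.mem_span_singleton']
      refine ⟨x * ↑u⁻¹, ?_⟩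
      have key : a * (1 - m) = x * g := by
        linear_combination -hsum - hz' - hxg
      have h1m : (1 - m) * (↑u⁻¹ : A) = 1 := by rw [← hu]; exact u.mul_inv
      calc x * ↑u⁻¹ * g = a * ((1 - m) * ↑u⁻¹) := by rw [← mul_assoc, key]; ring
        _ = a := by rw [h1m, mul_one]
    have : I ≤ Ideal.span {a} := heq ▸ le_sup_left
    exact this.trans (Ideal.span_le.mpr (by simpa using hag))
  · intro h
    exact Ideal.map_mono h
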